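/- arXiv:2511.01432 — 2 statements merged into one kernel-verified Lean document; each statement's English description precedes it below -/
import Mathlib

section
/- Let w ∈ ℝ³ with |w| = 4/3 and define u : ℝ³ → ℝ³ by u(x) = 3(1+|x|²)^{-2}((1-|x|²)w + 2(w·x)x + 2 w×x). Then u satisfies the critical 3/2-curl-curl equation ∇×(|∇×u|^{-1/2} ∇×u) = |u| u on ℝ³. -/
noncomputable section
open MeasureTheory Real
open scoped BigOperators

/-- `ℝ³` with the Euclidean norm. -/
abbrev E3 : Type := EuclideanSpace ℝ (Fin 3)

/-- Build a vector of `E3` from components. -/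
def toE3 (f : Fin 3 → ℝ) : E3 := (WithLp.equiv 2 (Fin 3 → ℝ)).symm f

/-- Euclidean inner product on `ℝ³`. -/
def ip (a b : E3) : ℝ := @inner ℝ _ _ a b

/-- `i`-th partial derivative of a scalar function on `ℝ³`. -/
def pd (i : Fin 3) (f : E3 → ℝ) (x : E3) : ℝ :=
  fderiv ℝ f x (EuclideanSpace.single i 1)

/-- The curl `∇×v` of a vector field on `ℝ³`. -/
def curl (v : E3 → E3) (x : E3) : E3 :=
  toE3 ![pd 1 (fun y => v y 2) x - pd 2 (fun y => v y 1) x,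
        pd 2 (fun y => v y 0) x - pd 0 (fun y => v y 2) x,
        pd 0 (fun y => v y 1) x - pd 1 (fun y => v y 0) x]

/-- The divergence of a vector field on `ℝ³`. -/
def div3 (v : E3 → E3) (x : E3) : ℝ :=
  pd 0 (fun y => v y 0) x + pd 1 (fun y => v y 1) x + pd 2 (fun y => v y 2) x

/-- The cross product on `ℝ³`. -/
def cross3 (a b : E3) : E3 :=
  toE3 (crossProduct (WithLp.equiv 2 (Fin 3 → ℝ) a) (WithLp.equiv 2 (Fin 3 → ℝ) b))

/-- Squared Frobenius norm `|∇v|²` of the Jacobian of a vector field. -/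
def jacNormSq (v : E3 → E3) (x : E3) : ℝ :=
  ∑ i : Fin 3, ∑ j : Fin 3, (pd i (fun y => v y j) x) ^ 2

/-- The Loss–Yau field `u(x) = 3(1+|x|²)⁻²((1-|x|²)w + 2(w·x)x + 2 w×x)`. -/
def uLY (w : E3) (x : E3) : E3 :=
  (3 * ((1 + ‖x‖ ^ 2) ^ 2)⁻¹) •
    ((1 - ‖x‖ ^ 2) • w + (2 * ip w x) • x + (2 : ℝ) • cross3 w x)


lemma uLY_apply (w y : E3) (j : Fin 3) :
    uLY w y j = 3 * ((1 + ‖y‖ ^ 2) * (1 + ‖y‖ ^ 2))⁻¹ *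
      ((1 - ‖y‖ ^ 2) * w j + 2 * ip w y * y j
        + 2 * (w (j+1) * y (j+2) - w (j+2) * y (j+1))) := by
  fin_cases j <;>
    simp [uLY, cross3, toE3, crossProduct, Fin.isValue, PiLp.smul_apply, PiLp.add_apply,
      WithLp.equiv_symm_apply, WithLp.equiv_apply, smul_eq_mul] <;>
    (have h : (1 + ‖y‖ ^ 2) ≠ 0 := by positivity) <;> field_simp <;>
    exact Or.inl (sq (1 + ‖y‖ ^ 2)).symm

lemma normsq_coord (x : E3) : ‖x‖ ^ 2 = x 0 ^ 2 + x 1 ^ 2 + x 2 ^ 2 := by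
  rw [PiLp.norm_sq_eq_of_L2]
  simp [Fin.sum_univ_three, sq_abs]

lemma ip_coord (w x : E3) : ip w x = w 0 * x 0 + w 1 * x 1 + w 2 * x 2 := by
  simp [ip, PiLp.inner_apply, Fin.sum_univ_three, RCLike.inner_apply]
  ring

set_option maxHeartbeats 1000000 in
lemma pd_uLY (w x : E3) (i j : Fin 3) :
    pd i (fun y => uLY w y j) x =
      3 * ((1 + ‖x‖ ^ 2) * (1 + ‖x‖ ^ 2))⁻¹ *
        (-(2 * x i) * w j + 2 * w i * x j + 2 * ip w x * (if j = i then 1 else 0)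
          + 2 * (w (j+1) * (if j + 2 = i then 1 else 0)
                 - w (j+2) * (if j + 1 = i then 1 else 0)))
      - 12 * x i * ((1 + ‖x‖ ^ 2) * ((1 + ‖x‖ ^ 2) * (1 + ‖x‖ ^ 2)))⁻¹ *
        ((1 - ‖x‖ ^ 2) * w j + 2 * ip w x * x j
          + 2 * (w (j+1) * x (j+2) - w (j+2) * x (j+1))) := by
  have hq : HasFDerivAt (fun y : E3 => ‖y‖ ^ 2) (2 • (innerSL ℝ x)) x := by
    simpa using (hasFDerivAt_id x).norm_sq
  have h1 : HasFDerivAt (fun y : E3 => 1 + ‖y‖ ^ 2) (2 • (innerSL ℝ x)) x := hq.const_add 1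
  have h1m := h1.mul h1
  have hne : (1 + ‖x‖ ^ 2) * (1 + ‖x‖ ^ 2) ≠ 0 := by positivity
  have hinv := (hasFDerivAt_inv' (𝕜 := ℝ) hne).comp x h1m
  have hP : HasFDerivAt (fun y : E3 => ip w y) (innerSL ℝ w) x := (innerSL ℝ w).hasFDerivAt
  have hk : ∀ k : Fin 3, HasFDerivAt (fun y : E3 => y k)
      (EuclideanSpace.proj k : E3 →L[ℝ] ℝ) x :=
    fun k => (EuclideanSpace.proj k : E3 →L[ℝ] ℝ).hasFDerivAt
  have hA := ((((hq.const_sub 1).mul_const (w j)).add (((hP.const_mul 2)).mul (hk j))).add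
    ((((hk (j+2)).const_mul (w (j+1))).sub ((hk (j+1)).const_mul (w (j+2)))).const_mul 2))
  have hfull : HasFDerivAt (fun y : E3 => 3 * ((1 + ‖y‖ ^ 2) * (1 + ‖y‖ ^ 2))⁻¹ *
      ((1 - ‖y‖ ^ 2) * w j + 2 * ip w y * y j
        + 2 * (w (j+1) * y (j+2) - w (j+2) * y (j+1)))) _ x :=
    (hinv.const_mul (3:ℝ)).mul hA
  have heq : (fun y => uLY w y j) = _ := funext fun y => uLY_apply w y j
  rw [pd, heq, hfull.fderiv]
  simp [ContinuousLinearMap.smul_apply, ContinuousLinearMap.add_apply,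
    ContinuousLinearMap.sub_apply, ContinuousLinearMap.comp_apply,
    ContinuousLinearMap.mulLeftRight_apply, EuclideanSpace.inner_single_right,
    EuclideanSpace.single_apply, real_inner_comm, smul_eq_mul]
  have hpos : (1 + ‖x‖ ^ 2) ≠ 0 := by positivity
  field_simp
  split_ifs <;> field_simp <;> ring

set_option maxHeartbeats 2000000 in
lemma curl_uLY (w x : E3) :
    curl (uLY w) x = (4 * (1 + ‖x‖ ^ 2)⁻¹) • uLY w x := by
  have hpos : (0:ℝ) < 1 + x 0 ^ 2 + x 1 ^ 2 + x 2 ^ 2 := by positivity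
  ext k
  fin_cases k
  · show pd 1 (fun y => uLY w y 2) x - pd 2 (fun y => uLY w y 1) x
        = 4 * (1 + ‖x‖ ^ 2)⁻¹ * uLY w x 0
    rw [pd_uLY, pd_uLY, uLY_apply]
    simp only [show ((0:Fin 3)+1) = 1 by decide, show ((0:Fin 3)+2) = 2 by decide,
      show ((1:Fin 3)+1) = 2 by decide, show ((1:Fin 3)+2) = 0 by decide,
      show ((2:Fin 3)+1) = 0 by decide, show ((2:Fin 3)+2) = 1 by decide,
      Fin.reduceAdd, Fin.reduceEq, if_true, if_false, ite_true, ite_false]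
    rw [normsq_coord, ip_coord]
    have h : (1 + (x 0 ^ 2 + x 1 ^ 2 + x 2 ^ 2)) ≠ 0 := by nlinarith
    field_simp
    ring
  · show pd 2 (fun y => uLY w y 0) x - pd 0 (fun y => uLY w y 2) x
        = 4 * (1 + ‖x‖ ^ 2)⁻¹ * uLY w x 1
    rw [pd_uLY, pd_uLY, uLY_apply]
    simp only [show ((0:Fin 3)+1) = 1 by decide, show ((0:Fin 3)+2) = 2 by decide,
      show ((1:Fin 3)+1) = 2 by decide, show ((1:Fin 3)+2) = 0 by decide,
      show ((2:Fin 3)+1) = 0 by decide, show ((2:Fin 3)+2) = 1 by decide,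
      Fin.reduceAdd, Fin.reduceEq, if_true, if_false, ite_true, ite_false]
    rw [normsq_coord, ip_coord]
    have h : (1 + (x 0 ^ 2 + x 1 ^ 2 + x 2 ^ 2)) ≠ 0 := by nlinarith
    field_simp
    ring
  · show pd 0 (fun y => uLY w y 1) x - pd 1 (fun y => uLY w y 0) x
        = 4 * (1 + ‖x‖ ^ 2)⁻¹ * uLY w x 2
    rw [pd_uLY, pd_uLY, uLY_apply]
    simp only [show ((0:Fin 3)+1) = 1 by decide, show ((0:Fin 3)+2) = 2 by decide,
      show ((1:Fin 3)+1) = 2 by decide, show ((1:Fin 3)+2) = 0 by decide,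
      show ((2:Fin 3)+1) = 0 by decide, show ((2:Fin 3)+2) = 1 by decide,
      Fin.reduceAdd, Fin.reduceEq, if_true, if_false, ite_true, ite_false]
    rw [normsq_coord, ip_coord]
    have h : (1 + (x 0 ^ 2 + x 1 ^ 2 + x 2 ^ 2)) ≠ 0 := by nlinarith
    field_simp
    ring

lemma norm_uLY (w x : E3) (hw : ‖w‖ = 4 / 3) :
    ‖uLY w x‖ = 4 * (1 + ‖x‖ ^ 2)⁻¹ := by
  have hw2 : w 0 ^ 2 + w 1 ^ 2 + w 2 ^ 2 = 16 / 9 := by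
    rw [← normsq_coord, hw]; norm_num
  have hQ : (0:ℝ) < 1 + (x 0 ^ 2 + x 1 ^ 2 + x 2 ^ 2) := by positivity
  have h2 : ‖uLY w x‖ ^ 2 = (4 * (1 + ‖x‖ ^ 2)⁻¹) ^ 2 := by
    rw [PiLp.norm_sq_eq_of_L2]
    simp only [Real.norm_eq_abs, sq_abs, Fin.sum_univ_three, uLY_apply,
      Fin.reduceAdd, Fin.isValue]
    rw [normsq_coord, ip_coord]
    have hS : ((1 - (x 0 ^ 2 + x 1 ^ 2 + x 2 ^ 2)) * w 0 + 2 * (w 0 * x 0 + w 1 * x 1 + w 2 * x 2) * x 0 + 2 * (w 1 * x 2 - w 2 * x 1)) ^ 2 + ((1 - (x 0 ^ 2 + x 1 ^ 2 + x 2 ^ 2)) * w 1 + 2 * (w 0 * x 0 + w 1 * x 1 + w 2 * x 2) * x 1 + 2 * (w 2 * x 0 - w 0 * x 2)) ^ 2 + ((1 - (x 0 ^ 2 + x 1 ^ 2 + x 2 ^ 2)) * w 2 + 2 * (w 0 * x 0 + w 1 * x 1 + w 2 * x 2) * x 2 + 2 * (w 0 * x 1 - w 1 * x 0)) ^ 2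 = (1 + (x 0 ^ 2 + x 1 ^ 2 + x 2 ^ 2)) ^ 2 * (16 / 9) := by
      linear_combination ((1 + (x 0 ^ 2 + x 1 ^ 2 + x 2 ^ 2)) ^ 2) * hw2
    trans 9 * (((1 + (x 0 ^ 2 + x 1 ^ 2 + x 2 ^ 2)) * (1 + (x 0 ^ 2 + x 1 ^ 2 + x 2 ^ 2)))⁻¹) ^ 2 * (((1 - (x 0 ^ 2 + x 1 ^ 2 + x 2 ^ 2)) * w 0 + 2 * (w 0 * x 0 + w 1 * x 1 + w 2 * x 2) * x 0 + 2 * (w 1 * x 2 - w 2 * x 1)) ^ 2 + ((1 - (x 0 ^ 2 + x 1 ^ 2 + x 2 ^ 2)) * w 1 + 2 * (w 0 * x 0 + w 1 * x 1 + w 2 * x 2) * x 1 + 2 * (w 2 * x 0 - w 0 * x 2)) ^ 2 + ((1 - (x 0 ^ 2 + x 1 ^ 2 + x 2 ^ 2)) * w 2 + 2 * (w 0 * x 0 + w 1 * x 1 + w 2 * x 2) * x 2 + 2 * (w 0 * x 1 - w 1 * x 0)) ^ 2)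
    · ring
    rw [hS]
    rw [mul_inv]
    field_simp
    ring
  have h1 : (0:ℝ) < 4 * (1 + ‖x‖ ^ 2)⁻¹ := by positivity
  nlinarith [norm_nonneg (uLY w x), h2, h1]

/-- For `|w| = 4/3` the Loss–Yau field solves the critical `3/2`-curl-curl equation
`∇×(|∇×u|^{-1/2} ∇×u) = |u| u` on `ℝ³`. -/
theorem uLY_solves_critical (w : E3) (hw : ‖w‖ = 4 / 3) (x : E3) :
    curl (fun y => ‖curl (uLY w) y‖ ^ (-(1 / 2) : ℝ) • curl (uLY w) y) x =
      ‖uLY w x‖ • uLY w x := by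
  have hfun : (fun y => ‖curl (uLY w) y‖ ^ (-(1 / 2) : ℝ) • curl (uLY w) y) = uLY w := by
    funext y
    have hb : (0:ℝ) < 4 * (1 + ‖y‖ ^ 2)⁻¹ := by positivity
    rw [curl_uLY, norm_smul, norm_uLY w y hw, Real.norm_eq_abs, abs_of_pos hb, smul_smul]
    have hrb : ((4 * (1 + ‖y‖ ^ 2)⁻¹) * (4 * (1 + ‖y‖ ^ 2)⁻¹)) ^ (-(1 / 2) : ℝ)
        = (4 * (1 + ‖y‖ ^ 2)⁻¹)⁻¹ := by
      rw [← sq, ← Real.rpow_natCast (4 * (1 + ‖y‖ ^ 2)⁻¹) 2, ← Real.rpow_mul hb.le]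
      norm_num [Real.rpow_neg_one]
    rw [hrb, inv_mul_cancel₀ hb.ne', one_smul]
  rw [hfun, curl_uLY, norm_uLY w x hw]
end
end

section
/- Let w ∈ ℝ³ with |w| = 4/3 and u(x) = 3(1+|x|²)^{-2}((1-|x|²)w + 2(w·x)x + 2 w×x). Then ∫_{ℝ³} |u(x)|³ dx = 16π². -/
noncomputable section
open MeasureTheory Real
open scoped BigOperators

/-! ### Auxiliary lemmas -/

lemma aux_normsq (x : E3) : ‖x‖^2 = x 0^2 + x 1^2 + x 2^2 := by
  rw [EuclideanSpace.norm_eq, Real.sq_sqrt (by positivity)]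
  simp [Fin.sum_univ_three, sq_abs]

lemma aux_ip_eq (a b : E3) : ip a b = a 0 * b 0 + a 1 * b 1 + a 2 * b 2 := by
  simp [ip, PiLp.inner_apply, Fin.sum_univ_three, mul_comm]

lemma aux_cross3_apply0 (a b : E3) : cross3 a b 0 = a 1 * b 2 - a 2 * b 1 := by
  simp [cross3, cross_apply, toE3]
lemma aux_cross3_apply1 (a b : E3) : cross3 a b 1 = a 2 * b 0 - a 0 * b 2 := by
  simp [cross3, cross_apply, toE3]
lemma aux_cross3_apply2 (a b : E3) : cross3 a b 2 = a 0 * b 1 - a 1 * b 0 := by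
  simp [cross3, cross_apply, toE3]

lemma aux_norm_uLY (w : E3) (hw : ‖w‖ = 4/3) (x : E3) :
    ‖uLY w x‖ = 4 * (1 + ‖x‖^2)⁻¹ := by
  have hx : (0:ℝ) < 1 + ‖x‖^2 := by positivity
  have hW : w 0^2 + w 1^2 + w 2^2 = 16/9 := by
    have h := (aux_normsq w).symm; rw [hw] at h; norm_num at h; linarith
  have hc : ∀ j : Fin 3, uLY w x j = (3 * ((1 + ‖x‖ ^ 2) ^ 2)⁻¹) *
      ((1 - ‖x‖ ^ 2) * w j + (2 * ip w x) * x j + 2 * (cross3 w x) j) := by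
    intro j
    simp [uLY, PiLp.smul_apply, PiLp.add_apply, smul_eq_mul]; ring
  have key : ((1-‖x‖^2)*w 0 + 2*(ip w x)*x 0 + 2*(w 1*x 2 - w 2*x 1))^2
      + ((1-‖x‖^2)*w 1 + 2*(ip w x)*x 1 + 2*(w 2*x 0 - w 0*x 2))^2
      + ((1-‖x‖^2)*w 2 + 2*(ip w x)*x 2 + 2*(w 0*x 1 - w 1*x 0))^2
      = (1+‖x‖^2)^2*(16/9) := by
    rw [aux_normsq x, aux_ip_eq, ← hW]; ring
  have h2 : ‖uLY w x‖^2 = (4 * (1 + ‖x‖^2)⁻¹)^2 := by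
    rw [aux_normsq (uLY w x), hc 0, hc 1, hc 2, aux_cross3_apply0, aux_cross3_apply1,
      aux_cross3_apply2]
    calc _ = (3 * ((1 + ‖x‖ ^ 2) ^ 2)⁻¹)^2 *
        (((1-‖x‖^2)*w 0 + 2*(ip w x)*x 0 + 2*(w 1*x 2 - w 2*x 1))^2
        + ((1-‖x‖^2)*w 1 + 2*(ip w x)*x 1 + 2*(w 2*x 0 - w 0*x 2))^2
        + ((1-‖x‖^2)*w 2 + 2*(ip w x)*x 2 + 2*(w 0*x 1 - w 1*x 0))^2) := by ring
      _ = (4 * (1 + ‖x‖^2)⁻¹)^2 := by rw [key]; field_simp; ring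
  calc ‖uLY w x‖ = √(‖uLY w x‖^2) := (Real.sqrt_sq (norm_nonneg _)).symm
    _ = 4 * (1 + ‖x‖^2)⁻¹ := by rw [h2, Real.sqrt_sq (by positivity)]

open Filter Set in
open scoped Topology in
lemma aux_oneD : ∫ y in Ioi (0:ℝ), y^2 • (4*(1+y^2)⁻¹)^3 = 4*π := by
  have hne : ∀ y : ℝ, (1 + y^2) ≠ 0 := fun y => by positivity
  set g : ℝ → ℝ := fun y => 8 * arctan y + 8 * (y / (1+y^2)) - 16 * (y / ((1+y^2)^2)) with hg
  have hderiv : ∀ y ∈ Ici (0:ℝ), HasDerivAt g (y^2 • (4*(1+y^2)⁻¹)^3) y := by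
    intro y _
    have h1 : HasDerivAt (fun y : ℝ => 1 + y^2) (2*y) y := by
      simpa using (hasDerivAt_pow 2 y).const_add 1
    have h2 : HasDerivAt (fun y : ℝ => (1+y^2)^2) (2*(1+y^2)*(2*y)) y := by
      simpa [mul_comm, mul_assoc] using h1.fun_pow 2
    have hd : HasDerivAt g
        (8 * (1/(1+y^2)) + 8 * ((1*(1+y^2) - y*(2*y))/(1+y^2)^2)
          - 16 * ((1*((1+y^2)^2) - y*(2*(1+y^2)*(2*y)))/((1+y^2)^2)^2)) y := by
      exact (((Real.hasDerivAt_arctan y).const_mul 8).add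
        (((hasDerivAt_id y).div h1 (hne y)).const_mul 8)).sub
        (((hasDerivAt_id y).div h2 (pow_ne_zero 2 (hne y))).const_mul 16)
    convert hd using 1
    have := hne y
    rw [smul_eq_mul]
    field_simp
    ring
  have g'nonneg : ∀ y ∈ Ioi (0:ℝ), 0 ≤ y^2 • (4*(1+y^2)⁻¹)^3 := by
    intro y _; positivity
  have htend : Tendsto g atTop (𝓝 (4*π)) := by
    have ha : Tendsto (fun y : ℝ => 8 * arctan y) atTop (𝓝 (8 * (π/2))) :=
      (tendsto_nhds_of_tendsto_nhdsWithin tendsto_arctan_atTop).const_mul 8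
    have hb : Tendsto (fun y : ℝ => y / (1+y^2)) atTop (𝓝 0) := by
      have h1 : Tendsto (fun y : ℝ => y⁻¹ + y) atTop atTop :=
        tendsto_inv_atTop_zero.add_atTop tendsto_id
      have h2 := h1.inv_tendsto_atTop
      refine h2.congr' ?_
      filter_upwards [eventually_gt_atTop (0:ℝ)] with y hy
      rw [div_eq_inv_mul]
      simp only [Pi.inv_apply]
      field_simp
    have hinv : Tendsto (fun y : ℝ => (1+y^2)⁻¹) atTop (𝓝 0) := by
      apply Tendsto.inv_tendsto_atTop
      exact tendsto_atTop_add_const_left _ 1 (tendsto_pow_atTop two_ne_zero)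
    have hc : Tendsto (fun y : ℝ => y / ((1+y^2)^2)) atTop (𝓝 0) := by
      have := hb.mul hinv
      simp only [mul_zero] at this
      refine this.congr fun y => ?_
      rw [mul_comm, inv_mul_eq_div, div_div, ← sq]
    have hfin := (ha.add (hb.const_mul 8)).sub (hc.const_mul 16)
    have heq : (4*π) = 8*(π/2) + 8*0 - 16*0 := by ring
    rw [hg, heq]; exact hfin
  have := integral_Ioi_of_hasDerivAt_of_nonneg' hderiv g'nonneg htend
  rw [this]
  simp [hg]

lemma aux_volball : (volume (Metric.ball (0 : E3) 1)).toReal = π * (4/3) := by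
  rw [EuclideanSpace.volume_ball]
  have hG : Real.Gamma ((Fintype.card (Fin 3) : ℝ)/2 + 1) = 3/4 * Real.sqrt π := by
    have h3 : (Fintype.card (Fin 3) : ℝ)/2 = 1/2 + 1 := by simp; norm_num
    rw [h3, Real.Gamma_add_one (by norm_num), Real.Gamma_add_one (by norm_num),
      Real.Gamma_one_half_eq]
    ring
  rw [hG]
  have hs : Real.sqrt π ^ Fintype.card (Fin 3) = π * Real.sqrt π := by
    simp only [Fintype.card_fin]
    rw [pow_succ, Real.sq_sqrt pi_nonneg]
  rw [hs]
  have hsp : Real.sqrt π > 0 := Real.sqrt_pos.mpr pi_pos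
  rw [ENNReal.ofReal_one, one_pow, one_mul, ENNReal.toReal_ofReal (by positivity)]
  rw [mul_div_assoc, mul_comm (3/4 : ℝ), ← div_div, div_self hsp.ne']
  ring

/-- For `|w| = 4/3`, `∫_{ℝ³} |u|³ dx = 16π²`. -/
theorem integral_norm_uLY_cube (w : E3) (hw : ‖w‖ = 4 / 3) :
    ∫ x : E3, ‖uLY w x‖ ^ 3 = 16 * Real.pi ^ 2 := by
  have hrw : ∀ x : E3, ‖uLY w x‖ ^ 3 = (fun r : ℝ => (4 * (1 + r^2)⁻¹)^3) ‖x‖ := by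
    intro x
    rw [aux_norm_uLY w hw x]
  rw [integral_congr_ae (Filter.Eventually.of_forall hrw)]
  have h := MeasureTheory.integral_fun_norm_addHaar (volume : Measure E3)
    (fun r : ℝ => (4 * (1 + r^2)⁻¹)^3)
  simp only [finrank_euclideanSpace, Fintype.card_fin] at h
  rw [h, measureReal_def, aux_volball]
  rw [show (3-1) = 2 from rfl, aux_oneD]
  simp only [nsmul_eq_mul, smul_eq_mul]
  ring
end
end
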